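/- Let p ∉ {2,5} be a prime and α, k, L ≥ 1 integers. Then h_{p^α,Lk} = h_{p^{α+ord_p(ρ_{k,L})},L} / gcd(k, h_{p^{α+ord_p(ρ_{k,L})},L}). -/

import Mathlib

def rho (k L : ℕ) : ℕ := ∑ i ∈ Finset.range k, 10 ^ (L * i)

/-- `h p α M` is the multiplicative order of `10^M` modulo `p^(α + ord_p(10^M - 1))`. -/
noncomputable def h (p α M : ℕ) : ℕ :=
  orderOf ((10 : ZMod (p ^ (α + padicValNat p (10 ^ M - 1)))) ^ M)

lemma rho_key (k L : ℕ) : (10 ^ L - 1) * rho k L = 10 ^ (L * k) - 1 := by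
  have h1 : (1 : ℕ) ≤ 10 ^ L := Nat.one_le_pow _ _ (by norm_num)
  have h2 : (1 : ℕ) ≤ 10 ^ (L * k) := Nat.one_le_pow _ _ (by norm_num)
  have := mul_geom_sum ((10 : ℤ) ^ L) k
  apply Nat.cast_injective (R := ℤ)
  push_cast [rho, Nat.cast_sub h1, Nat.cast_sub h2]
  calc ((10:ℤ) ^ L - 1) * ∑ i ∈ Finset.range k, (10:ℤ) ^ (L * i)
      = ((10:ℤ) ^ L - 1) * ∑ i ∈ Finset.range k, ((10:ℤ) ^ L) ^ i := by
        congr 1; exact Finset.sum_congr rfl fun i _ => (pow_mul 10 L i)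
    _ = ((10:ℤ) ^ L) ^ k - 1 := mul_geom_sum _ _
    _ = (10:ℤ) ^ (L * k) - 1 := by rw [pow_mul]

theorem h_formula (p : ℕ) (hp : p.Prime) (hp2 : p ≠ 2) (hp5 : p ≠ 5)
    (α k L : ℕ) (hα : 1 ≤ α) (hk : 1 ≤ k) (hL : 1 ≤ L) :
    h p α (L * k) =
      h p (α + padicValNat p (rho k L)) L /
        Nat.gcd k (h p (α + padicValNat p (rho k L)) L) := by
  haveI : Fact p.Prime := ⟨hp⟩
  have h1 : (10 : ℕ) ^ L - 1 ≠ 0 := by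
    have : (10:ℕ)^1 ≤ 10 ^ L := Nat.pow_le_pow_right (by norm_num) hL
    omega
  have hrho : rho k L ≠ 0 := by
    have : 0 < rho k L := by
      apply Finset.sum_pos
      · intro i _; positivity
      · exact Finset.nonempty_range_iff.mpr (by omega)
    omega
  have hval : α + padicValNat p (10 ^ (L * k) - 1)
      = (α + padicValNat p (rho k L)) + padicValNat p (10 ^ L - 1) := by
    rw [← rho_key k L, padicValNat.mul h1 hrho]
    ring
  unfold h
  rw [hval, pow_mul, orderOf_pow' _ (by omega : k ≠ 0), Nat.gcd_comm]
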